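/- Let d ≥ 1, θ > 0, and let σ : ℝ^d → ℝ^{d×d} satisfy σ(x)σ(x)ᵀ = θ I_{d×d} + σ̂(x)σ̂(x)ᵀ for a measurable σ̂ : ℝ^d → ℝ^{d×d}. Let b : ℝ^d → ℝ^d be measurable, and suppose there are constants L, α₁, α₂, R > 0 such that for all x, y ∈ ℝ^d: (I) ‖σ̂(x) − σ̂(y)‖_HS ≤ L|x−y|, and (II) 2⟨b(x) − b(y), x−y⟩ + ‖σ̂(x) − σ̂(y)‖²_HS ≤ φ(|x−y|)|x−y|, where φ(r) := r·[ α₁ 1_{[0,R]}(r) + ( α₁ − (α₁+α₂)(r/R − 1) ) 1_{(R,2R]}(r) − α₂ 1_{(2R,∞)}(r) ]. Define the second-order operator ℒ f(x) := ⟨b(x), ∇f(x)⟩ + (1/2) Tr( σ(x)σ(x)ᵀ ∇²f(x) ). Then for every q with 2 < q < 2 + α₂ L^{−2}, the function g(x) := (1 + |x|²)^{q/2} satisfies a Lyapunov inequality: there exist constants K₁, K₂ > 0 such that ℒg(x) ≤ K₁ − K₂ g(x) for all x ∈ ℝ^d. -/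

import Mathlib

open MeasureTheory Matrix Filter Topology RealInnerProductSpace

noncomputable section

/-- The Hilbert–Schmidt (Frobenius) norm of a matrix. -/
def hsNorm {d : ℕ} (A : Matrix (Fin d) (Fin d) ℝ) : ℝ :=
  Real.sqrt (∑ i, ∑ j, (A i j) ^ 2)

/-- The second partial derivative `∂_i ∂_j g`. -/
def secondPartial (d : ℕ) (g : EuclideanSpace ℝ (Fin d) → ℝ) (x : EuclideanSpace ℝ (Fin d))
    (i j : Fin d) : ℝ :=
  fderiv ℝ (fun x' => fderiv ℝ g x' (EuclideanSpace.single j 1)) x (EuclideanSpace.single i 1)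

/-- The diffusion generator `ℒ f(x) = ⟨b(x), ∇f(x)⟩ + (1/2) Tr(σ(x)σ(x)ᵀ ∇²f(x))`. -/
def diffusionGen (d : ℕ) (b : EuclideanSpace ℝ (Fin d) → EuclideanSpace ℝ (Fin d))
    (σ : EuclideanSpace ℝ (Fin d) → Matrix (Fin d) (Fin d) ℝ)
    (g : EuclideanSpace ℝ (Fin d) → ℝ) (x : EuclideanSpace ℝ (Fin d)) : ℝ :=
  ⟪b x, gradient g x⟫ + (1/2) * ∑ i, ∑ j, (σ x * (σ x)ᵀ) i j * secondPartial d g x j i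

/-- The long-distance dissipativity profile `φ` of Example 5.1. -/
def cutoffPhi (α₁ α₂ R r : ℝ) : ℝ :=
  r * (α₁ * (Set.Icc (0:ℝ) R).indicator (fun _ => (1:ℝ)) r
    + (α₁ - (α₁ + α₂) * (r / R - 1)) * (Set.Ioc R (2 * R)).indicator (fun _ => (1:ℝ)) r
    - α₂ * (Set.Ioi (2 * R)).indicator (fun _ => (1:ℝ)) r)

variable {d : ℕ}

local notation "E" => EuclideanSpace ℝ (Fin d)

lemma hasFDerivAt_upow (p : ℝ) (x : E) :
    HasFDerivAt (fun x' : E => (1 + ‖x'‖ ^ 2) ^ p)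
      ((2 * p * (1 + ‖x‖ ^ 2) ^ (p - 1)) • innerSL ℝ x) x := by
  have hn : HasFDerivAt (fun x' : E => 1 + ‖x'‖ ^ 2) (2 • innerSL ℝ x) x := by
    simpa using ((hasStrictFDerivAt_norm_sq x).hasFDerivAt.const_add 1)
  have hu : (0:ℝ) < 1 + ‖x‖ ^ 2 := by positivity
  have hh : HasDerivAt (fun t : ℝ => t ^ p) (p * (1 + ‖x‖ ^ 2) ^ (p - 1)) (1 + ‖x‖ ^ 2) :=
    Real.hasDerivAt_rpow_const (Or.inl hu.ne')
  have := hh.comp_hasFDerivAt x hn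
  refine this.congr_fderiv ?_
  ext y
  simp only [ContinuousLinearMap.smul_apply, innerSL_apply_apply, smul_eq_mul, nsmul_eq_mul]
  ring

lemma fderiv_upow_apply (p : ℝ) (x : E) (j : Fin d) :
    fderiv ℝ (fun x' : E => (1 + ‖x'‖ ^ 2) ^ p) x (EuclideanSpace.single j 1) =
      2 * p * (1 + ‖x‖ ^ 2) ^ (p - 1) * x j := by
  rw [(hasFDerivAt_upow p x).fderiv]
  simp [EuclideanSpace.inner_single_right]

lemma secondPartial_formula (q : ℝ) (x : E) (i j : Fin d) :
    fderiv ℝ (fun x' : E =>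
        fderiv ℝ (fun x'' : E => (1 + ‖x''‖ ^ 2) ^ (q/2)) x' (EuclideanSpace.single j 1)) x
        (EuclideanSpace.single i 1) =
      q * (q - 2) * (1 + ‖x‖ ^ 2) ^ (q/2 - 2) * (x i * x j)
        + q * (1 + ‖x‖ ^ 2) ^ (q/2 - 1) * (if i = j then 1 else 0) := by
  have hfun : (fun x' : E =>
      fderiv ℝ (fun x'' : E => (1 + ‖x''‖ ^ 2) ^ (q/2)) x' (EuclideanSpace.single j 1))
      = fun x' : E => (2 * (q/2) * (1 + ‖x'‖ ^ 2) ^ (q/2 - 1)) * x' j := by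
    funext x'
    rw [fderiv_upow_apply]
  rw [hfun]
  -- derivative of x' ↦ c(x') * x' j
  have hc : HasFDerivAt (fun x' : E => 2 * (q/2) * (1 + ‖x'‖ ^ 2) ^ (q/2 - 1))
      ((2 * (q/2)) • ((2 * (q/2 - 1) * (1 + ‖x‖ ^ 2) ^ (q/2 - 1 - 1)) • innerSL ℝ x)) x :=
    (hasFDerivAt_upow (q/2 - 1) x).const_mul _
  have hproj : HasFDerivAt (fun x' : E => x' j)
      (innerSL ℝ (EuclideanSpace.single j (1:ℝ))) x := by
    have h := (innerSL ℝ (EuclideanSpace.single j (1:ℝ))).hasFDerivAt (x := x)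
    convert h using 1
    funext x'
    simp [EuclideanSpace.inner_single_left]
  have hmul : HasFDerivAt (fun x' : E => 2 * (q/2) * (1 + ‖x'‖ ^ 2) ^ (q/2 - 1) * x' j) _ x :=
    hc.mul hproj
  rw [hmul.fderiv]
  simp only [ContinuousLinearMap.add_apply, ContinuousLinearMap.smul_apply,
    innerSL_apply_apply, smul_eq_mul]
  rw [EuclideanSpace.inner_single_right, EuclideanSpace.inner_single_right,
    EuclideanSpace.single_apply]
  have he : q/2 - 1 - 1 = q/2 - 2 := by ring
  rw [he]
  simp only [_root_.map_one, starRingEnd_apply, star_trivial, one_mul]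
  by_cases h : i = j <;> simp [h] <;> ring

lemma gradient_upow (q : ℝ) (x : E) :
    gradient (fun x' : E => (1 + ‖x'‖ ^ 2) ^ (q/2)) x
      = (q * (1 + ‖x‖ ^ 2) ^ (q/2 - 1)) • x := by
  have h := hasFDerivAt_upow (d := d) (q/2) x
  have h2 : HasGradientAt (fun x' : E => (1 + ‖x'‖ ^ 2) ^ (q/2))
      ((q * (1 + ‖x‖ ^ 2) ^ (q/2 - 1)) • x) x := by
    rw [hasGradientAt_iff_hasFDerivAt]
    refine h.congr_fderiv ?_
    ext y
    rw [InnerProductSpace.toDual_apply_apply, real_inner_smul_left]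
    simp only [ContinuousLinearMap.smul_apply, innerSL_apply_apply, smul_eq_mul]
    ring
  exact h2.gradient

def matToEuc {d : ℕ} (A : Matrix (Fin d) (Fin d) ℝ) : EuclideanSpace ℝ (Fin d × Fin d) :=
  WithLp.toLp 2 (fun p : Fin d × Fin d => A p.1 p.2)

lemma hsNorm_eq_norm (A : Matrix (Fin d) (Fin d) ℝ) : hsNorm A = ‖matToEuc A‖ := by
  rw [EuclideanSpace.norm_eq, hsNorm]
  congr 1
  rw [Fintype.sum_prod_type]
  refine Finset.sum_congr rfl fun i _ => Finset.sum_congr rfl fun j _ => ?_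
  rw [Real.norm_eq_abs, sq_abs]
  rfl

lemma hsNorm_nonneg (A : Matrix (Fin d) (Fin d) ℝ) : 0 ≤ hsNorm A :=
  Real.sqrt_nonneg _

lemma hsNorm_sq (A : Matrix (Fin d) (Fin d) ℝ) : hsNorm A ^ 2 = ∑ i, ∑ j, (A i j) ^ 2 := by
  rw [hsNorm, Real.sq_sqrt]
  positivity

lemma hsNorm_le_add (A B : Matrix (Fin d) (Fin d) ℝ) :
    hsNorm A ≤ hsNorm (A - B) + hsNorm B := by
  rw [hsNorm_eq_norm, hsNorm_eq_norm, hsNorm_eq_norm]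
  have : matToEuc A = matToEuc (A - B) + matToEuc B := by
    ext p; simp [matToEuc]
  rw [this]
  exact norm_add_le _ _

lemma cutoffPhi_mul_le (α₁ α₂ R : ℝ) (hα₁ : 0 < α₁) (hα₂ : 0 < α₂) (hR : 0 < R)
    (r : ℝ) (hr : 0 ≤ r) :
    cutoffPhi α₁ α₂ R r * r ≤ -α₂ * r ^ 2 + (α₁ + α₂) * (2 * R) * r := by
  unfold cutoffPhi
  by_cases h2 : r ≤ 2 * R
  · rw [Set.indicator_of_notMem (by simp [h2.not_gt] : r ∉ Set.Ioi (2*R))]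
    by_cases h1 : r ≤ R
    · rw [Set.indicator_of_mem (Set.mem_Icc.2 ⟨hr, h1⟩),
        Set.indicator_of_notMem (by simp [h1] : r ∉ Set.Ioc R (2*R))]
      have key : r * r ≤ 2 * R * r := mul_le_mul_of_nonneg_right h2 hr
      linarith [mul_le_mul_of_nonneg_left key (by linarith : (0:ℝ) ≤ α₁ + α₂)]
    · push_neg at h1
      rw [Set.indicator_of_notMem (by simp [h1.not_ge] : r ∉ Set.Icc 0 R),
        Set.indicator_of_mem (Set.mem_Ioc.2 ⟨h1, h2⟩)]
      have hge : 0 ≤ (α₁ + α₂) * (r / R - 1) := by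
        apply mul_nonneg (by linarith)
        rw [sub_nonneg, le_div_iff₀ hR]
        linarith
      have key : r * r ≤ 2 * R * r := mul_le_mul_of_nonneg_right h2 hr
      linarith [mul_le_mul_of_nonneg_left key (by linarith : (0:ℝ) ≤ α₁ + α₂),
        mul_nonneg hge (mul_nonneg hr hr)]
  · push_neg at h2
    have hR2 : R < r := lt_trans (by linarith) h2
    rw [Set.indicator_of_notMem (by simp [hR2.not_ge] : r ∉ Set.Icc 0 R),
      Set.indicator_of_notMem (by simp [h2.not_ge] : r ∉ Set.Ioc R (2*R)),
      Set.indicator_of_mem (Set.mem_Ioi.2 h2)]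
    have : 0 ≤ (α₁ + α₂) * (2*R) * r := by positivity
    linarith

lemma euc_norm_sq (x : E) : ‖x‖ ^ 2 = ∑ i, x i ^ 2 := by
  rw [EuclideanSpace.norm_eq, Real.sq_sqrt (by positivity)]
  exact Finset.sum_congr rfl fun i _ => by rw [Real.norm_eq_abs, sq_abs]

lemma quadM_eq (M : Matrix (Fin d) (Fin d) ℝ) (x : E) :
    ∑ i, ∑ j, (M * Mᵀ) i j * (x j * x i) = ∑ k, (∑ i, M i k * x i) ^ 2 := by
  simp only [Matrix.mul_apply, Matrix.transpose_apply]
  calc ∑ i, ∑ j, (∑ k, M i k * M j k) * (x j * x i)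
      = ∑ i, ∑ j, ∑ k, (M i k * x i) * (M j k * x j) := by
        refine Finset.sum_congr rfl fun i _ => Finset.sum_congr rfl fun j _ => ?_
        rw [Finset.sum_mul]; exact Finset.sum_congr rfl fun k _ => by ring
    _ = ∑ i, ∑ k, ∑ j, (M i k * x i) * (M j k * x j) :=
        Finset.sum_congr rfl fun i _ => Finset.sum_comm
    _ = ∑ k, ∑ i, ∑ j, (M i k * x i) * (M j k * x j) := Finset.sum_comm
    _ = ∑ k, (∑ i, M i k * x i) ^ 2 := by
        refine Finset.sum_congr rfl fun k _ => ?_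
        rw [sq, Finset.sum_mul_sum]

lemma quadM_le (M : Matrix (Fin d) (Fin d) ℝ) (x : E) :
    ∑ i, ∑ j, (M * Mᵀ) i j * (x j * x i) ≤ hsNorm M ^ 2 * ‖x‖ ^ 2 := by
  rw [quadM_eq, hsNorm_sq, euc_norm_sq]
  calc ∑ k, (∑ i, M i k * x i) ^ 2
      ≤ ∑ k, (∑ i, M i k ^ 2) * (∑ i, x i ^ 2) :=
        Finset.sum_le_sum fun k _ => Finset.sum_mul_sq_le_sq_mul_sq _ _ _
    _ = (∑ i, ∑ k, M i k ^ 2) * (∑ i, x i ^ 2) := by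
        rw [← Finset.sum_mul, Finset.sum_comm]

lemma traceM_eq (M : Matrix (Fin d) (Fin d) ℝ) :
    ∑ i, (M * Mᵀ) i i = hsNorm M ^ 2 := by
  rw [hsNorm_sq]
  simp only [Matrix.mul_apply, Matrix.transpose_apply]
  exact Finset.sum_congr rfl fun i _ => Finset.sum_congr rfl fun k _ => (sq _).symm

lemma diffusionGen_formula (q : ℝ) (b : E → E) (σ : E → Matrix (Fin d) (Fin d) ℝ) (x : E) :
    diffusionGen d b σ (fun x' => (1 + ‖x'‖ ^ 2) ^ (q/2)) x
      = q * (1 + ‖x‖ ^ 2) ^ (q/2 - 1) * ⟪b x, x⟫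
        + (1/2) * (q * (q-2) * (1 + ‖x‖ ^ 2) ^ (q/2 - 2)
              * (∑ i, ∑ j, (σ x * (σ x)ᵀ) i j * (x j * x i))
            + q * (1 + ‖x‖ ^ 2) ^ (q/2 - 1) * ∑ i, (σ x * (σ x)ᵀ) i i) := by
  set c₂ := q * (q-2) * (1 + ‖x‖ ^ 2) ^ (q/2 - 2) with hc₂
  set c₁ := q * (1 + ‖x‖ ^ 2) ^ (q/2 - 1) with hc₁
  set A := σ x * (σ x)ᵀ with hA
  unfold diffusionGen
  rw [gradient_upow, real_inner_smul_right]
  have hsp : ∀ i j : Fin d, secondPartial d (fun x' => (1 + ‖x'‖ ^ 2) ^ (q/2)) x j i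
      = c₂ * (x j * x i) + c₁ * (if j = i then 1 else 0) := by
    intro i j
    rw [secondPartial, secondPartial_formula]
  have hQ : ∑ i, ∑ j, A i j * secondPartial d (fun x' => (1 + ‖x'‖ ^ 2) ^ (q/2)) x j i
      = c₂ * (∑ i, ∑ j, A i j * (x j * x i)) + c₁ * ∑ i, A i i :=
  calc ∑ i, ∑ j, A i j * secondPartial d (fun x' => (1 + ‖x'‖ ^ 2) ^ (q/2)) x j i
      = ∑ i, ∑ j, (c₂ * (A i j * (x j * x i)) + (if j = i then c₁ * A i j else 0)) := by
        refine Finset.sum_congr rfl fun i _ => Finset.sum_congr rfl fun j _ => ?_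
        rw [hsp]
        by_cases h : j = i <;> simp [h] <;> ring
    _ = ∑ i, (c₂ * ∑ j, A i j * (x j * x i) + c₁ * A i i) := by
        refine Finset.sum_congr rfl fun i _ => ?_
        rw [Finset.sum_add_distrib, ← Finset.mul_sum, Finset.sum_ite_eq' Finset.univ i
          (fun j => c₁ * A i j)]
        simp
    _ = c₂ * (∑ i, ∑ j, A i j * (x j * x i)) + c₁ * ∑ i, A i i := by
        rw [Finset.sum_add_distrib, ← Finset.mul_sum, ← Finset.mul_sum]
  rw [hQ]

set_option maxHeartbeats 1000000 in
/-- **Example 5.1 (Lyapunov inequality).**  Under uniform ellipticity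
`σσᵀ = θ I + σ̂σ̂ᵀ`, the Lipschitz condition (I) on `σ̂` and the long-distance
dissipativity condition (II), for every `2 < q < 2 + α₂ L⁻²` the function
`g(x) = (1 + |x|²)^{q/2}` satisfies `ℒ g ≤ K₁ - K₂ g` for some constants `K₁, K₂ > 0`. -/
theorem lyapunov_bound_diffusion {d : ℕ} (hd : 0 < d)
    (θ : ℝ) (hθ : 0 < θ)
    (b : EuclideanSpace ℝ (Fin d) → EuclideanSpace ℝ (Fin d)) (hb : Measurable b)
    (σ σhat : EuclideanSpace ℝ (Fin d) → Matrix (Fin d) (Fin d) ℝ)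
    (hσ : ∀ i j : Fin d, Measurable fun x => σ x i j)
    (hσhat : ∀ i j : Fin d, Measurable fun x => σhat x i j)
    (hdecomp : ∀ x, σ x * (σ x)ᵀ = θ • (1 : Matrix (Fin d) (Fin d) ℝ) + σhat x * (σhat x)ᵀ)
    (L α₁ α₂ R : ℝ) (hL : 0 < L) (hα₁ : 0 < α₁) (hα₂ : 0 < α₂) (hR : 0 < R)
    (hI : ∀ x y : EuclideanSpace ℝ (Fin d), hsNorm (σhat x - σhat y) ≤ L * ‖x - y‖)
    (hII : ∀ x y : EuclideanSpace ℝ (Fin d),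
      2 * ⟪b x - b y, x - y⟫ + hsNorm (σhat x - σhat y) ^ 2 ≤
        cutoffPhi α₁ α₂ R ‖x - y‖ * ‖x - y‖)
    (q : ℝ) (hq2 : 2 < q) (hq : q < 2 + α₂ / L ^ 2) :
    ∃ K₁ > (0:ℝ), ∃ K₂ > (0:ℝ), ∀ x : EuclideanSpace ℝ (Fin d),
      diffusionGen d b σ (fun x' => (1 + ‖x'‖ ^ 2) ^ (q / 2)) x ≤
        K₁ - K₂ * (1 + ‖x‖ ^ 2) ^ (q / 2) := by
  have hL2 : (0:ℝ) < L ^ 2 := by positivity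
  set ε : ℝ := α₂ - (q - 2) * L ^ 2 with hεdef
  have hε : 0 < ε := by
    have h1 : q - 2 < α₂ / L ^ 2 := by linarith
    have := (lt_div_iff₀ hL2).mp h1
    simp only [hεdef]; linarith
  set β : ℝ := hsNorm (σhat 0) with hβdef
  have hβ0 : 0 ≤ β := hsNorm_nonneg _
  set B : ℝ := ‖b 0‖ with hBdef
  have hB0 : 0 ≤ B := norm_nonneg _
  set C₂ : ℝ := (α₁ + α₂) * (2 * R) + 2 * B + 2 * (q - 1) * β * L with hC₂def
  have hC₂0 : 0 ≤ C₂ := by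
    have h1 : (0:ℝ) < (α₁ + α₂) * (2 * R) := by positivity
    have h2 : (0:ℝ) ≤ 2 * (q-1) * β * L :=
      mul_nonneg (mul_nonneg (by linarith : (0:ℝ) ≤ 2 * (q-1)) hβ0) hL.le
    simp only [hC₂def]; linarith
  set C₃ : ℝ := θ * (q - 2 + d) + (q - 1) * β ^ 2 with hC₃def
  have hC₃0 : 0 < C₃ := by
    have hd' : (0:ℝ) < (d:ℝ) := by exact_mod_cast hd
    have h1 : (0:ℝ) < θ * (q - 2 + d) := mul_pos hθ (by linarith)
    have h2 : (0:ℝ) ≤ (q - 1) * β ^ 2 :=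
      mul_nonneg (by linarith : (0:ℝ) ≤ q - 1) (sq_nonneg β)
    simp only [hC₃def]; linarith
  set C₅ : ℝ := C₃ + C₂ ^ 2 / (2 * ε) + ε / 2 with hC₅def
  have hC₅0 : 0 < C₅ := by positivity
  set u₀ : ℝ := max 1 (4 * C₅ / ε) with hu₀def
  have hu₀1 : (1:ℝ) ≤ u₀ := le_max_left _ _
  have h4 : 4 * C₅ / ε ≤ u₀ := le_max_right _ _
  clear_value ε β B C₂ C₃ C₅ u₀
  have hu₀pow : 0 < u₀ ^ (q/2 - 1) := Real.rpow_pos_of_pos (by linarith) _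
  have hK₁pos : 0 < (q/2) * C₅ * u₀ ^ (q/2 - 1) + 1 := by
    have h5 : 0 < (q/2) * C₅ := mul_pos (by linarith) hC₅0
    have h6 := mul_pos h5 hu₀pow
    linarith
  have hK₂pos : 0 < q * ε / 8 := by
    have := mul_pos (show (0:ℝ) < q by linarith) hε
    linarith
  refine ⟨(q/2) * C₅ * u₀ ^ (q/2 - 1) + 1, hK₁pos, q * ε / 8, hK₂pos, fun x => ?_⟩
  set K₁ : ℝ := (q/2) * C₅ * u₀ ^ (q/2 - 1) + 1 with hK₁def
  set r : ℝ := ‖x‖ with hrdef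
  have hr0 : 0 ≤ r := norm_nonneg _
  set u : ℝ := 1 + ‖x‖ ^ 2 with hudef
  have hu0 : (0:ℝ) < u := by positivity
  have hu1 : (1:ℝ) ≤ u := by
    have := sq_nonneg ‖x‖
    simp only [hudef]; linarith
  have hru : r ^ 2 ≤ u := by simp only [hudef, hrdef]; linarith
  set S : ℝ := hsNorm (σhat x - σhat 0) with hSdef
  have hS0 : 0 ≤ S := hsNorm_nonneg _
  have hSL : S ≤ L * r := by simpa using hI x 0
  set Th : ℝ := hsNorm (σhat x) with hThdef
  have hTh0 : 0 ≤ Th := hsNorm_nonneg _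
  have hThS : Th ≤ S + β := by rw [hβdef]; exact hsNorm_le_add _ _
  -- drift bound
  have hb2 : 2 * ⟪b x, x⟫ ≤ -α₂ * r ^ 2 + ((α₁ + α₂) * (2 * R) + 2 * B) * r - S ^ 2 := by
    have h := hII x 0
    simp only [sub_zero] at h
    have hphi := cutoffPhi_mul_le α₁ α₂ R hα₁ hα₂ hR ‖x‖ (norm_nonneg x)
    have hinner : ⟪b x - b 0, x⟫ = ⟪b x, x⟫ - ⟪b 0, x⟫ := inner_sub_left _ _ _
    have habs : ⟪b 0, x⟫ ≤ B * ‖x‖ := by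
      rw [hBdef]
      have h2 := abs_real_inner_le_norm (b 0) x
      rw [abs_le] at h2
      exact h2.2
    rw [hinner] at h
    rw [hrdef, hSdef]
    linarith
  -- rpow facts
  have hup : u ^ (q/2 - 2) * u = u ^ (q/2 - 1) := by
    have h1 : u ^ (q/2 - 2) * u ^ (1:ℝ) = u ^ (q/2 - 2 + 1) := (Real.rpow_add hu0 _ _).symm
    rw [Real.rpow_one] at h1
    rw [h1]; congr 1; ring
  have hup2 : u ^ (q/2 - 1) * u = u ^ (q/2) := by
    have h1 : u ^ (q/2 - 1) * u ^ (1:ℝ) = u ^ (q/2 - 1 + 1) := (Real.rpow_add hu0 _ _).symm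
    rw [Real.rpow_one] at h1
    rw [h1]; congr 1; ring
  have hupos : (0:ℝ) < u ^ (q/2 - 1) := Real.rpow_pos_of_pos hu0 _
  have hupos2 : (0:ℝ) < u ^ (q/2 - 2) := Real.rpow_pos_of_pos hu0 _
  -- quadratic form and trace
  set A := σ x * (σ x)ᵀ with hAdef
  set M := σhat x with hMdef
  have hQsplit : ∑ i, ∑ j, A i j * (x j * x i)
      = θ * r ^ 2 + ∑ i, ∑ j, (M * Mᵀ) i j * (x j * x i) := by
    rw [hAdef, hdecomp x]
    simp only [Matrix.add_apply, Matrix.smul_apply, Matrix.one_apply, smul_eq_mul]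
    have : ∀ i : Fin d, ∑ j, ((θ * if i = j then 1 else 0) + (M * Mᵀ) i j) * (x j * x i)
        = θ * (x i * x i) + ∑ j, (M * Mᵀ) i j * (x j * x i) := by
      intro i
      have h1 : ∀ j : Fin d, ((θ * if i = j then 1 else 0) + (M * Mᵀ) i j) * (x j * x i)
          = (if j = i then θ * (x j * x i) else 0) + (M * Mᵀ) i j * (x j * x i) := by
        intro j
        by_cases h : i = j
        · subst h; rw [if_pos rfl, if_pos rfl]; ring
        · rw [if_neg h, if_neg (fun hh => h hh.symm)]; ring
      rw [Finset.sum_congr rfl fun j _ => h1 j, Finset.sum_add_distrib,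
        Finset.sum_ite_eq' Finset.univ i (fun j => θ * (x j * x i))]
      simp
    rw [Finset.sum_congr rfl fun i _ => this i, Finset.sum_add_distrib, ← Finset.mul_sum]
    congr 1
    rw [hrdef, euc_norm_sq]
    congr 1
    exact Finset.sum_congr rfl fun i _ => (sq _).symm
  have hQle : ∑ i, ∑ j, A i j * (x j * x i) ≤ (θ + Th ^ 2) * r ^ 2 := by
    rw [hQsplit]
    have := quadM_le M x
    rw [← hrdef, ← hThdef] at this
    linarith
  have hTr : ∑ i, A i i = θ * d + Th ^ 2 := by
    rw [hAdef, hdecomp x]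
    simp only [Matrix.add_apply, Matrix.smul_apply, Matrix.one_apply_eq, smul_eq_mul, mul_one]
    rw [Finset.sum_add_distrib, traceM_eq, ← hThdef, Finset.sum_const, Finset.card_univ,
      Fintype.card_fin]
    simp [mul_comm]
  -- main estimate
  rw [diffusionGen_formula]
  rw [← hudef, ← hAdef]
  clear_value K₁ r u S Th A M
  have hbrack : 2 * ⟪b x, x⟫ + (q - 2) * (θ + Th ^ 2) + θ * d + Th ^ 2 ≤ C₅ - (ε/2) * u := by
    have hTh2 : Th ^ 2 ≤ (S + β) ^ 2 := pow_le_pow_left₀ hTh0 hThS 2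
    have hSr : S ≤ L * r := hSL
    have hC2r : C₂ * r - (ε/2) * r ^ 2 ≤ C₂ ^ 2 / (2 * ε) := by
      rw [le_div_iff₀ (by linarith : (0:ℝ) < 2 * ε)]
      linarith [sq_nonneg (ε * r - C₂)]
    have hq1 : (0:ℝ) < q - 1 := by linarith
    have key : 2 * ⟪b x, x⟫ + (q - 2) * (θ + Th ^ 2) + θ * d + Th ^ 2
        ≤ -ε * r ^ 2 + C₂ * r + C₃ := by
      have e1 : (q - 1) * Th ^ 2 ≤ (q - 1) * (S + β) ^ 2 :=
        mul_le_mul_of_nonneg_left hTh2 (by linarith : (0:ℝ) ≤ q - 1)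
      have hS2 : S ^ 2 ≤ L ^ 2 * r ^ 2 := by
        have := pow_le_pow_left₀ hS0 hSr 2
        calc S ^ 2 ≤ (L * r) ^ 2 := this
          _ = L ^ 2 * r ^ 2 := by ring
      have e2 : (q - 2) * S ^ 2 ≤ (q - 2) * (L ^ 2 * r ^ 2) :=
        mul_le_mul_of_nonneg_left hS2 (by linarith : (0:ℝ) ≤ q - 2)
      have e3 : 2 * (q - 1) * β * S ≤ 2 * (q - 1) * β * (L * r) := by
        apply mul_le_mul_of_nonneg_left hSr
        exact mul_nonneg (by linarith : (0:ℝ) ≤ 2 * (q - 1)) hβ0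
      have expand : (q - 1) * (S + β) ^ 2
          = (q - 1) * S ^ 2 + 2 * (q - 1) * β * S + (q - 1) * β ^ 2 := by ring
      simp only [hC₂def, hC₃def, hεdef]
      rw [expand] at e1
      linarith [hb2, e1, e2, e3]
    have : -ε * r ^ 2 + C₂ * r + C₃ ≤ C₅ - (ε/2) * u := by
      simp only [hC₅def, hudef, ← hrdef]
      linarith [hC2r]
    linarith
  have hmain : q * u ^ (q/2 - 1) * ⟪b x, x⟫
      + (1/2) * (q * (q - 2) * u ^ (q/2 - 2) * (∑ i, ∑ j, A i j * (x j * x i))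
          + q * u ^ (q/2 - 1) * ∑ i, A i i)
      ≤ (q/2) * u ^ (q/2 - 1) * (C₅ - (ε/2) * u) := by
    have hq0 : (0:ℝ) < q := by linarith
    have step : q * u ^ (q/2 - 1) * ⟪b x, x⟫
        + (1/2) * (q * (q - 2) * u ^ (q/2 - 2) * (∑ i, ∑ j, A i j * (x j * x i))
            + q * u ^ (q/2 - 1) * ∑ i, A i i)
        ≤ (q/2) * u ^ (q/2 - 1)
            * (2 * ⟪b x, x⟫ + (q - 2) * (θ + Th ^ 2) + θ * d + Th ^ 2) := by
      rw [hTr]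
      have h2 : q * (q - 2) * u ^ (q/2 - 2) * (∑ i, ∑ j, A i j * (x j * x i))
          ≤ q * (q - 2) * u ^ (q/2 - 2) * ((θ + Th ^ 2) * u) := by
        apply mul_le_mul_of_nonneg_left _
          (mul_nonneg (mul_nonneg (by linarith : (0:ℝ) ≤ q) (by linarith : (0:ℝ) ≤ q - 2))
            hupos2.le)
        calc ∑ i, ∑ j, A i j * (x j * x i) ≤ (θ + Th ^ 2) * r ^ 2 := hQle
          _ ≤ (θ + Th ^ 2) * u :=
              mul_le_mul_of_nonneg_left hru (add_nonneg hθ.le (sq_nonneg Th))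
      have h3 : q * (q - 2) * u ^ (q/2 - 2) * ((θ + Th ^ 2) * u)
          = q * (q - 2) * u ^ (q/2 - 1) * (θ + Th ^ 2) := by
        rw [← hup]; ring
      linarith [h2, h3]
    calc _ ≤ (q/2) * u ^ (q/2 - 1)
            * (2 * ⟪b x, x⟫ + (q - 2) * (θ + Th ^ 2) + θ * d + Th ^ 2) := step
      _ ≤ (q/2) * u ^ (q/2 - 1) * (C₅ - (ε/2) * u) :=
          mul_le_mul_of_nonneg_left hbrack
            (mul_nonneg (by linarith : (0:ℝ) ≤ q/2) hupos.le)
  refine hmain.trans ?_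
  -- final: (q/2) u^{q/2-1} (C₅ - (ε/2) u) ≤ K₁ - (qε/8) u^{q/2}
  have hexp : (q/2) * u ^ (q/2 - 1) * (C₅ - (ε/2) * u)
      = (q/2) * C₅ * u ^ (q/2 - 1) - (q * ε / 4) * u ^ (q/2) := by
    rw [← hup2]; ring
  rw [hexp]
  have hfin : (q/2) * C₅ * u ^ (q/2 - 1) ≤ K₁ + (q * ε / 8) * u ^ (q/2) := by
    have hux : (0:ℝ) ≤ u ^ (q/2) := (Real.rpow_pos_of_pos hu0 _).le
    by_cases hcase : u ≤ u₀
    · have h1 : u ^ (q/2 - 1) ≤ u₀ ^ (q/2 - 1) :=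
        Real.rpow_le_rpow hu0.le hcase (by linarith)
      have : (q/2) * C₅ * u ^ (q/2 - 1) ≤ (q/2) * C₅ * u₀ ^ (q/2 - 1) :=
        mul_le_mul_of_nonneg_left h1 (mul_nonneg (by linarith) hC₅0.le)
      linarith [this, hK₁def, mul_nonneg hK₂pos.le hux]
    · push_neg at hcase
      have hC5u : C₅ ≤ (ε / 4) * u := by
        rw [div_le_iff₀ hε] at h4
        have := mul_lt_mul_of_pos_right hcase hε
        linarith
      have : (q/2) * C₅ * u ^ (q/2 - 1) ≤ (q/2) * ((ε/4) * u) * u ^ (q/2 - 1) := by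
        apply mul_le_mul_of_nonneg_right _ hupos.le
        exact mul_le_mul_of_nonneg_left hC5u (by positivity)
      have heq : (q/2) * ((ε/4) * u) * u ^ (q/2 - 1) = (q * ε / 8) * u ^ (q/2) := by
        rw [← hup2]; ring
      have hK₁0 : (0:ℝ) ≤ K₁ := by rw [hK₁def]; linarith
      linarith [this, heq ▸ this]
  linarith
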